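/- Let d be a pseudometric on a type α, let Σ¹,…,Σ^C (C ≥ 1) be nonempty finite subsets of α with positive weights λ₁,…,λ_C. Fix any ρ ∈ α and set W = max_k λ_k·d_min(ρ, Σ^k). Then there exist k ∈ {1,…,C} and σ ∈ Σ^k such that max_j λ_j·d_min(σ, Σ^j) ≤ 2W. -/
import Mathlib


/-- The min distance between a point `π` and a nonempty finite set `T` of
points: `min_{σ ∈ T} d(π, σ)`. -/
noncomputable def minDist {α : Type*} (d : α → α → ℝ) (π : α) (T : Finset α)
    (hT : T.Nonempty) : ℝ :=
  T.inf' hT (d π)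

/-- min-Pick-Perm 2-approximation: there is a ranking in one of the classes
whose minmax min-distance objective is at most `2W`. -/
theorem exists_min_pick_perm_le_two_W {α : Type*} (d : α → α → ℝ)
    (hd_self : ∀ x, d x x = 0)
    (hd_symm : ∀ x y, d x y = d y x)
    (hd_nonneg : ∀ x y, 0 ≤ d x y)
    (hd_tri : ∀ x y z, d x z ≤ d x y + d y z)
    {C : ℕ} (hC : 0 < C)
    (S : Fin C → Finset α) (hS : ∀ k, (S k).Nonempty)
    (lam : Fin C → ℝ) (hlam : ∀ k, 0 < lam k)
    (ρ : α) (W : ℝ)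
    (hW : W = Finset.univ.sup' ⟨⟨0, hC⟩, Finset.mem_univ _⟩
      (fun k => lam k * minDist d ρ (S k) (hS k))) :
    ∃ k : Fin C, ∃ σ ∈ S k,
      Finset.univ.sup' ⟨⟨0, hC⟩, Finset.mem_univ _⟩
        (fun j => lam j * minDist d σ (S j) (hS j)) ≤ 2 * W := by
  -- choose the class k minimizing minDist ρ (S k)
  obtain ⟨k, -, hkmin⟩ := Finset.exists_min_image (Finset.univ : Finset (Fin C))
    (fun k => minDist d ρ (S k) (hS k)) ⟨⟨0, hC⟩, Finset.mem_univ _⟩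
  -- choose σ in S k achieving the min
  obtain ⟨σ, hσ, hσd⟩ := Finset.exists_mem_eq_inf' (hS k) (d ρ)
  refine ⟨k, σ, hσ, Finset.sup'_le _ _ ?_⟩
  intro j _
  have hWj : lam j * minDist d ρ (S j) (hS j) ≤ W := by
    rw [hW]; exact Finset.le_sup' (fun k => lam k * minDist d ρ (S k) (hS k)) (Finset.mem_univ j)
  have hdρσ : d ρ σ = minDist d ρ (S k) (hS k) := hσd.symm
  have hkj : d ρ σ ≤ minDist d ρ (S j) (hS j) := by
    rw [hdρσ]; exact hkmin j (Finset.mem_univ j)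
  have htri : minDist d σ (S j) (hS j) ≤ d σ ρ + minDist d ρ (S j) (hS j) := by
    obtain ⟨τ, hτ, hτd⟩ := Finset.exists_mem_eq_inf' (hS j) (d ρ)
    calc minDist d σ (S j) (hS j) ≤ d σ τ := Finset.inf'_le _ hτ
      _ ≤ d σ ρ + d ρ τ := hd_tri σ ρ τ
      _ = d σ ρ + minDist d ρ (S j) (hS j) := by unfold minDist; rw [hτd]
  have hlamj := (hlam j).le
  calc lam j * minDist d σ (S j) (hS j)
      ≤ lam j * (d σ ρ + minDist d ρ (S j) (hS j)) := by
        exact mul_le_mul_of_nonneg_left htri hlamj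
    _ = lam j * d σ ρ + lam j * minDist d ρ (S j) (hS j) := by ring
    _ ≤ lam j * minDist d ρ (S j) (hS j) + lam j * minDist d ρ (S j) (hS j) := by
        have : d σ ρ ≤ minDist d ρ (S j) (hS j) := by rw [hd_symm σ ρ]; exact hkj
        have := mul_le_mul_of_nonneg_left this hlamj
        linarith
    _ ≤ W + W := by linarith
    _ = 2 * W := by ring
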